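/- For every integer k ≥ 3, there exists a digraph G on 2^k vertices that contains a directed cycle (so that the G-metric is not a poset metric) such that the extended binary Hamming code H̃_k is a 2-perfect G-code. -/

import Mathlib

open Classical

noncomputable def wtG {V : Type*} [Fintype V] (E : V → V → Prop) (x : V → ZMod 2) : ℕ :=
  (Finset.univ.filter (fun v => ∃ u, x u ≠ 0 ∧ Relation.ReflTransGen E u v)).card

noncomputable def dG {V : Type*} [Fintype V] (E : V → V → Prop) (x y : V → ZMod 2) : ℕ :=
  wtG E (x - y)

def IsCovering {β : Type*} (d : β → β → ℕ) (C : Set β) (r : ℕ) : Prop :=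
  ∀ x, ∃ c ∈ C, d c x ≤ r

def IsPacking {β : Type*} (d : β → β → ℕ) (C : Set β) (r : ℕ) : Prop :=
  ∀ c₁ ∈ C, ∀ c₂ ∈ C, c₁ ≠ c₂ → ∀ x, ¬(d c₁ x ≤ r ∧ d c₂ x ≤ r)

def extHamming (k : ℕ) : Set (Fin (2 ^ k) → ZMod 2) :=
  {x | (∑ i, x i) = 0 ∧
    ∀ j < k, (∑ i ∈ Finset.univ.filter (fun i : Fin (2 ^ k) => Nat.testBit i.val j), x i) = 0}

namespace S17
open Finset

def fm (a : ℕ) : Option ℕ :=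
  if a < 3 then none
  else if a = 3 then some 7
  else if a = 4 then some 1
  else if a = 5 then some 2
  else if a = 6 then some 0
  else if a = 7 then some 3
  else some 0

lemma fm_lt8 {a b : ℕ} (h : fm a = some b) : b < 8 := by
  unfold fm at h; split_ifs at h <;> simp_all <;> omega

lemma fm_ne {a b : ℕ} (h : fm a = some b) : b ≠ a := by
  unfold fm at h; split_ifs at h <;> simp_all <;> omega

lemma fm_big {a : ℕ} (h : 8 ≤ a) : fm a = some 0 := by
  unfold fm; split_ifs <;> first | rfl | omega

lemma fm_step_small : ∀ a b c : Fin 8, fm a.val = some b.val → fm b.val = some c.val → c.val = a.val := by decide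

lemma fm_step {a b c : ℕ} (h1 : fm a = some b) (h2 : fm b = some c) : c = a := by
  have hb := fm_lt8 h1
  have hc := fm_lt8 h2
  rcases Nat.lt_or_ge a 8 with ha | ha
  · exact fm_step_small ⟨a, ha⟩ ⟨b, hb⟩ ⟨c, hc⟩ h1 h2
  · rw [fm_big ha] at h1
    have : b = 0 := by simpa using h1.symm
    subst this; simp [fm] at h2

def EE (k : ℕ) : Fin (2^k) → Fin (2^k) → Prop := fun u v => fm u.val = some v.val

lemma reach_iff {k : ℕ} (u v : Fin (2^k)) :
    Relation.ReflTransGen (EE k) u v ↔ v = u ∨ fm u.val = some v.val := by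
  constructor
  · intro h
    induction h with
    | refl => exact Or.inl rfl
    | tail h1 h2 ih =>
      rcases ih with rfl | hb
      · exact Or.inr h2
      · exact Or.inl (Fin.ext (fm_step hb h2))
  · rintro (rfl | h)
    · exact Relation.ReflTransGen.refl
    · exact Relation.ReflTransGen.single h

def ee {k : ℕ} (i : Fin (2^k)) : Fin (2^k) → ZMod 2 := fun v => if v = i then 1 else 0

lemma zmod2_cases (a : ZMod 2) : a = 0 ∨ a = 1 := by revert a; decide

def CondN (a b : ℕ) : Prop := (fm a = none ∨ fm a = some b) ∧ (fm b = none ∨ fm b = some a)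

instance (a b : ℕ) : Decidable (CondN a b) := by unfold CondN; exact inferInstance

lemma wt_le_two {k : ℕ} (y : Fin (2^k) → ZMod 2) (s : Finset (Fin (2^k))) (hcard : s.card ≤ 2)
    (hsupp : ∀ v, y v ≠ 0 → v ∈ s)
    (hreach : ∀ u v : Fin (2^k), y u ≠ 0 → fm u.val = some v.val → v ∈ s) :
    wtG (EE k) y ≤ 2 := by
  refine le_trans (le_trans (Finset.card_le_card ?_) hcard) le_rfl
  intro v hv
  simp only [Finset.mem_filter] at hv
  obtain ⟨-, u, hu, hr⟩ := hv
  rcases (reach_iff u v).mp hr with rfl | h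
  · exact hsupp v hu
  · exact hreach u v hu h

lemma ee_apply_ne {k : ℕ} {i v : Fin (2^k)} (h : v ≠ i) : ee i v = 0 := if_neg h

lemma wt_zero {k : ℕ} : wtG (EE k) (0 : Fin (2^k) → ZMod 2) = 0 := by
  unfold wtG
  simp

lemma wt_ee_le {k : ℕ} (hn : 8 ≤ 2^k) (i : Fin (2^k)) : wtG (EE k) (ee i) ≤ 2 := by
  have hs : ∀ v : Fin (2^k), ee i v ≠ 0 → v = i := by
    intro v hv; by_contra hne; exact hv (ee_apply_ne hne)
  rcases h : fm i.val with _ | b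
  · refine wt_le_two _ {i} (by simp) (fun v hv => by simp [hs v hv]) ?_
    intro u v hu hf
    rw [hs u hu] at hf
    rw [h] at hf
    exact absurd hf (by simp)
  · have hb : b < 2^k := lt_of_lt_of_le (fm_lt8 h) hn
    refine wt_le_two _ {i, ⟨b, hb⟩} ((Finset.card_insert_le _ _).trans (by simp)) ?_ ?_
    · intro v hv; simp [hs v hv]
    · intro u v hu hf
      rw [hs u hu, h] at hf
      have : v.val = b := by simpa using hf.symm
      simp [Fin.ext_iff, this]

lemma pair_apply {k : ℕ} {i j v : Fin (2^k)} (hij : i ≠ j) :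
    (ee i + ee j) v ≠ 0 ↔ (v = i ∨ v = j) := by
  constructor
  · intro h; by_contra hc; push_neg at hc
    exact h (by simp [Pi.add_apply, ee_apply_ne hc.1, ee_apply_ne hc.2])
  · rintro (rfl | rfl)
    · simp [Pi.add_apply, ee, if_neg hij, hij]
    · simp [Pi.add_apply, ee, if_neg (Ne.symm hij), Ne.symm hij]

lemma wt_pair_le {k : ℕ} {i j : Fin (2^k)} (hij : i ≠ j) (hc : CondN i.val j.val) :
    wtG (EE k) (ee i + ee j) ≤ 2 := by
  refine wt_le_two _ {i, j} ((Finset.card_insert_le _ _).trans (by simp)) ?_ ?_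
  · intro v hv
    rcases (pair_apply hij).mp hv with rfl | rfl <;> simp
  · intro u v hu hf
    rcases (pair_apply hij).mp hu with rfl | rfl
    · rcases hc.1 with h | h
      · rw [h] at hf; exact absurd hf (by simp)
      · rw [h] at hf
        have : v.val = j.val := by simpa using hf.symm
        simp [Fin.ext_iff, this]
    · rcases hc.2 with h | h
      · rw [h] at hf; exact absurd hf (by simp)
      · rw [h] at hf
        have : v.val = i.val := by simpa using hf.symm
        simp [Fin.ext_iff, this]

lemma ball_classify {k : ℕ} (hn : 8 ≤ 2^k) {y : Fin (2^k) → ZMod 2} (h : wtG (EE k) y ≤ 2) :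
    y = 0 ∨ (∃ i, y = ee i) ∨ ∃ i j, i ≠ j ∧ CondN i.val j.val ∧ y = ee i + ee j := by
  classical
  set cl := Finset.univ.filter (fun v => ∃ u, y u ≠ 0 ∧ Relation.ReflTransGen (EE k) u v) with hcl
  have hwt : wtG (EE k) y = cl.card := by rw [hcl]; unfold wtG; congr
  set supp := Finset.univ.filter (fun v => y v ≠ 0) with hsupp
  have hsub : supp ⊆ cl := by
    intro v hv
    rw [Finset.mem_filter] at hv ⊢
    exact ⟨hv.1, v, hv.2, Relation.ReflTransGen.refl⟩
  have hmem : ∀ v, v ∈ supp ↔ y v ≠ 0 := by intro v; simp [hsupp]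
  have hcard : supp.card ≤ 2 := le_trans (Finset.card_le_card hsub) (le_trans (le_of_eq hwt.symm) h)
  have h012 : supp.card = 0 ∨ supp.card = 1 ∨ supp.card = 2 := by omega
  rcases h012 with h0 | h1 | h2
  · left
    rw [Finset.card_eq_zero] at h0
    funext v
    by_contra hv
    have : v ∈ supp := (hmem v).mpr hv
    rw [h0] at this
    exact absurd this (Finset.notMem_empty v)
  · right; left
    obtain ⟨i, hi⟩ := Finset.card_eq_one.mp h1
    refine ⟨i, funext fun v => ?_⟩
    by_cases hv : v = i
    · subst hv
      have : y v ≠ 0 := (hmem v).mp (by rw [hi]; exact Finset.mem_singleton_self v)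
      rcases zmod2_cases (y v) with h' | h'
      · exact absurd h' this
      · rw [h']; simp [ee]
    · have : v ∉ supp := by rw [hi]; simpa using hv
      have hy : y v = 0 := by by_contra hc; exact this ((hmem v).mpr hc)
      rw [hy, ee_apply_ne hv]
  · right; right
    obtain ⟨i, j, hij, hsuppeq⟩ := Finset.card_eq_two.mp h2
    have hyij : y = ee i + ee j := by
      funext v
      by_cases hvi : v = i
      · subst hvi
        have : y v ≠ 0 := (hmem v).mp (by rw [hsuppeq]; simp)
        rcases zmod2_cases (y v) with h' | h'
        · exact absurd h' this
        · rw [h']; simp [Pi.add_apply, ee, if_neg hij, hij]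
      · by_cases hvj : v = j
        · subst hvj
          have : y v ≠ 0 := (hmem v).mp (by rw [hsuppeq]; simp)
          rcases zmod2_cases (y v) with h' | h'
          · exact absurd h' this
          · rw [h']; simp [Pi.add_apply, ee, if_neg (Ne.symm hij), Ne.symm hij]
        · have : v ∉ supp := by rw [hsuppeq]; simp [hvi, hvj]
          have hy : y v = 0 := by by_contra hc; exact this ((hmem v).mpr hc)
          rw [hy, Pi.add_apply, ee_apply_ne hvi, ee_apply_ne hvj]; simp
    refine ⟨i, j, hij, ?_, hyij⟩
    have hyi : y i ≠ 0 := (hmem i).mp (by rw [hsuppeq]; simp)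
    have hyj : y j ≠ 0 := (hmem j).mp (by rw [hsuppeq]; simp)
    -- prove CondN by contradiction
    by_contra hC
    unfold CondN at hC
    push_neg at hC
    -- extract a "bad" extra reachable vertex
    have hbad : ∃ (u : Fin (2^k)) (w : ℕ), y u ≠ 0 ∧ fm u.val = some w ∧ w ≠ i.val ∧ w ≠ j.val := by
      by_cases hci : (fm i.val = none ∨ fm i.val = some j.val)
      · obtain ⟨h1', h2'⟩ := hC hci
        rcases hw : fm j.val with _ | w
        · exact absurd hw h1'
        · refine ⟨j, w, hyj, hw, ?_, fun hwj => fm_ne hw (by rw [hwj])⟩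
          intro hwi
          exact h2' (by rw [hw, hwi])
      · push_neg at hci
        rcases hw : fm i.val with _ | w
        · exact absurd hw hci.1
        · refine ⟨i, w, hyi, hw, fun hwi => fm_ne hw (by rw [hwi]), ?_⟩
          intro hwj
          exact hci.2 (by rw [hw, hwj])
    obtain ⟨u, w, hu, hw, hwi, hwj⟩ := hbad
    have hw8 : w < 2^k := lt_of_lt_of_le (fm_lt8 hw) hn
    set w' : Fin (2^k) := ⟨w, hw8⟩ with hw'
    have h3 : ({i, j, w'} : Finset (Fin (2^k))) ⊆ cl := by
      intro v hv
      simp only [Finset.mem_insert, Finset.mem_singleton] at hv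
      rcases hv with rfl | rfl | rfl
      · exact hsub ((hmem v).mpr hyi)
      · exact hsub ((hmem v).mpr hyj)
      · rw [Finset.mem_filter]
        exact ⟨Finset.mem_univ _, u, hu, Relation.ReflTransGen.single hw⟩
    have hwi' : w' ≠ i := by simp [Fin.ext_iff, hw', hwi]
    have hwj' : w' ≠ j := by simp [Fin.ext_iff, hw', hwj]
    have hc3 : ({i, j, w'} : Finset (Fin (2^k))).card = 3 := by
      rw [Finset.card_insert_of_notMem (by simp [hij, Ne.symm hwi']),
        Finset.card_insert_of_notMem (by simp [Ne.symm hwj'])]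
      simp
    have : 3 ≤ cl.card := hc3 ▸ Finset.card_le_card h3
    omega

def parity {k : ℕ} (x : Fin (2^k) → ZMod 2) : ZMod 2 := ∑ i, x i

def synd {k : ℕ} (l : ℕ) (x : Fin (2^k) → ZMod 2) : ZMod 2 :=
  ∑ i ∈ Finset.univ.filter (fun i : Fin (2^k) => Nat.testBit i.val l), x i

lemma mem_ext {k : ℕ} (x : Fin (2^k) → ZMod 2) :
    x ∈ extHamming k ↔ parity x = 0 ∧ ∀ j < k, synd j x = 0 := Iff.rfl

lemma parity_sub {k : ℕ} (x y : Fin (2^k) → ZMod 2) : parity (x - y) = parity x - parity y := by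
  simp [parity, Finset.sum_sub_distrib]

lemma synd_sub {k : ℕ} (l : ℕ) (x y : Fin (2^k) → ZMod 2) :
    synd l (x - y) = synd l x - synd l y := by
  simp [synd, Finset.sum_sub_distrib]

lemma parity_ee {k : ℕ} (i : Fin (2^k)) : parity (ee i) = 1 := by
  simp [parity, ee, Finset.sum_ite_eq']

lemma synd_ee {k : ℕ} (l : ℕ) (i : Fin (2^k)) :
    synd l (ee i) = if Nat.testBit i.val l then 1 else 0 := by
  simp [synd, ee, Finset.sum_ite_eq', Finset.mem_filter]

lemma parity_pair {k : ℕ} (i j : Fin (2^k)) : parity (ee i + ee j) = 0 := by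
  have : parity (ee i + ee j) = parity (ee i) + parity (ee j) := by
    simp [parity, Finset.sum_add_distrib]
  rw [this, parity_ee, parity_ee]; decide

lemma synd_pair {k : ℕ} (l : ℕ) (i j : Fin (2^k)) :
    synd l (ee i + ee j) = if Nat.testBit (i.val ^^^ j.val) l then 1 else 0 := by
  have : synd l (ee i + ee j) = synd l (ee i) + synd l (ee j) := by
    simp [synd, Finset.sum_add_distrib]
  rw [this, synd_ee, synd_ee, Nat.testBit_xor]
  cases hi : Nat.testBit i.val l <;> cases hj : Nat.testBit j.val l <;> simp <;> decide

lemma bit_diff {k a b : ℕ} (ha : a < 2^k) (hb : b < 2^k) (hab : a ≠ b) :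
    ∃ l < k, Nat.testBit a l ≠ Nat.testBit b l := by
  by_contra hc
  push_neg at hc
  refine hab (Nat.eq_of_testBit_eq fun l => ?_)
  rcases Nat.lt_or_ge l k with hl | hl
  · exact hc l hl
  · rw [Nat.testBit_lt_two_pow (lt_of_lt_of_le ha (Nat.pow_le_pow_right (by norm_num) hl)),
      Nat.testBit_lt_two_pow (lt_of_lt_of_le hb (Nat.pow_le_pow_right (by norm_num) hl))]

lemma digits_lt (g : ℕ → Bool) (N : ℕ) :
    (∑ l ∈ Finset.range N, if g l then 2^l else 0) < 2^N := by
  induction N with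
  | zero => simp
  | succ N ih =>
    rw [Finset.sum_range_succ, pow_succ]
    split <;> omega

lemma digits_testBit (g : ℕ → Bool) (N : ℕ) {l : ℕ} (hl : l < N) :
    Nat.testBit (∑ i ∈ Finset.range N, if g i then 2^i else 0) l = g l := by
  induction N with
  | zero => omega
  | succ N ih =>
    rw [Finset.sum_range_succ]
    rcases Nat.lt_or_ge l N with h | h
    · rcases hgN : g N with _ | _
      · simpa [hgN] using ih h
      · rw [if_pos rfl, Nat.add_comm, Nat.testBit_two_pow_add_gt h]
        exact ih h
    · have hlN : l = N := by omega
      subst hlN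
      have hlt := digits_lt g l
      rcases hgN : g l with _ | _
      · simpa [hgN] using Nat.testBit_lt_two_pow hlt
      · rw [if_pos rfl, Nat.add_comm, Nat.testBit_two_pow_add_eq,
          Nat.testBit_lt_two_pow hlt]
        rfl

def P (m : ℕ) : ℕ × ℕ :=
  if m = 1 then (0,1) else if m = 2 then (0,2) else if m = 3 then (1,2)
  else if m = 4 then (3,7) else if m = 5 then (1,4) else if m = 6 then (0,6)
  else if m = 7 then (2,5) else (0, m)

lemma P_spec {m : ℕ} (h1 : 1 ≤ m) :
    (P m).1 ≠ (P m).2 ∧ (P m).1 ^^^ (P m).2 = m ∧ CondN (P m).1 (P m).2 ∧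
      (P m).1 < 8 ∧ ((P m).2 < 8 ∨ (P m).2 = m) := by
  rcases Nat.lt_or_ge m 8 with h8 | h8
  · interval_cases m
    · exact ⟨by decide, by decide, by decide, by decide, Or.inl (by decide)⟩
    · exact ⟨by decide, by decide, by decide, by decide, Or.inl (by decide)⟩
    · exact ⟨by decide, by decide, by decide, by decide, Or.inl (by decide)⟩
    · exact ⟨by decide, by decide, by decide, by decide, Or.inl (by decide)⟩
    · exact ⟨by decide, by decide, by decide, by decide, Or.inl (by decide)⟩
    · exact ⟨by decide, by decide, by decide, by decide, Or.inl (by decide)⟩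
    · exact ⟨by decide, by decide, by decide, by decide, Or.inl (by decide)⟩
  · have hP : P m = (0, m) := by
      unfold P; split_ifs <;> first | rfl | omega
    have hcond : CondN 0 m := ⟨Or.inl (by decide), Or.inr (fm_big h8)⟩
    rw [hP]
    dsimp only
    exact ⟨by omega, Nat.zero_xor m, hcond, by norm_num, Or.inr rfl⟩

lemma cond_small : ∀ a b a' b' : Fin 8, a ≠ b → a' ≠ b' → CondN a.val b.val → CondN a'.val b'.val →
    a.val ^^^ b.val = a'.val ^^^ b'.val →
    (a.val = a'.val ∧ b.val = b'.val) ∨ (a.val = b'.val ∧ b.val = a'.val) := by decide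

lemma cond_classify {a b : ℕ} (hc : CondN a b) :
    (a < 8 ∧ b < 8) ∨ (a = 0 ∧ 8 ≤ b) ∨ (b = 0 ∧ 8 ≤ a) := by
  rcases Nat.lt_or_ge a 8 with ha | ha
  · rcases Nat.lt_or_ge b 8 with hb | hb
    · exact Or.inl ⟨ha, hb⟩
    · refine Or.inr (Or.inl ⟨?_, hb⟩)
      rcases hc.2 with h | h
      · rw [fm_big hb] at h; simp at h
      · rw [fm_big hb] at h
        exact (by simpa using h.symm : a = 0)
  · refine Or.inr (Or.inr ⟨?_, ha⟩)
    rcases hc.1 with h | h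
    · rw [fm_big ha] at h; simp at h
    · rw [fm_big ha] at h
      exact (by simpa using h.symm : b = 0)

lemma pair_unique {a b a' b' : ℕ} (hab : a ≠ b) (hab' : a' ≠ b')
    (hc : CondN a b) (hc' : CondN a' b') (hxor : a ^^^ b = a' ^^^ b') :
    (a = a' ∧ b = b') ∨ (a = b' ∧ b = a') := by
  have key : ∀ x y : ℕ, x = 0 → 8 ≤ y → 8 ≤ x ^^^ y := by
    intro x y hx hy; subst hx; rw [Nat.zero_xor]; exact hy
  have key2 : ∀ x y : ℕ, 8 ≤ x → y = 0 → 8 ≤ x ^^^ y := by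
    intro x y hx hy; subst hy; rw [Nat.xor_zero]; exact hx
  have keysm : ∀ x y : ℕ, x < 8 → y < 8 → x ^^^ y < 8 := by
    intro x y hx hy
    exact Nat.xor_lt_two_pow (n := 3) hx hy
  rcases cond_classify hc with ⟨ha, hb⟩ | ⟨ha, hb⟩ | ⟨ha, hb⟩ <;>
    rcases cond_classify hc' with ⟨ha', hb'⟩ | ⟨ha', hb'⟩ | ⟨ha', hb'⟩
  · have := cond_small ⟨a, ha⟩ ⟨b, hb⟩ ⟨a', ha'⟩ ⟨b', hb'⟩
      (by simpa [Fin.ext_iff] using hab) (by simpa [Fin.ext_iff] using hab') hc hc' hxor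
    simpa using this
  · have := keysm a b ha hb
    have := key a' b' ha' hb'
    omega
  · have := keysm a b ha hb
    have := key2 a' b' hb' ha'
    omega
  · have := key a b ha hb
    have := keysm a' b' ha' hb'
    omega
  · subst ha; subst ha'
    rw [Nat.zero_xor, Nat.zero_xor] at hxor
    exact Or.inl ⟨rfl, hxor⟩
  · subst ha; subst ha'
    rw [Nat.zero_xor, Nat.xor_zero] at hxor
    exact Or.inr ⟨rfl, hxor⟩
  · have := key2 a b hb ha
    have := keysm a' b' ha' hb'
    omega
  · subst ha; subst ha'
    rw [Nat.xor_zero, Nat.zero_xor] at hxor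
    exact Or.inr ⟨hxor, rfl⟩
  · subst ha; subst ha'
    rw [Nat.xor_zero, Nat.xor_zero] at hxor
    exact Or.inl ⟨hxor, rfl⟩

lemma xor_eq_zero_nat {a b : ℕ} (h : a ^^^ b = 0) : a = b := by
  have := congrArg (fun z => z ^^^ b) h
  simpa [Nat.xor_assoc] using this

lemma neg_self_zmod2 {k : ℕ} (z : Fin (2^k) → ZMod 2) : -z = z := by
  have h : ∀ a : ZMod 2, -a = a := by decide
  funext v
  exact h (z v)

lemma parity_zero {k : ℕ} : parity (0 : Fin (2^k) → ZMod 2) = 0 := by simp [parity]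

lemma synd_zero {k l : ℕ} : synd l (0 : Fin (2^k) → ZMod 2) = 0 := by simp [synd]

lemma ite_zmod_ne {A B : Bool} (h : A ≠ B) :
    (if A then (1 : ZMod 2) else 0) ≠ (if B then 1 else 0) := by
  cases A <;> cases B <;> simp_all <;> decide

end S17

theorem stmt_17' (k : ℕ) (hk : 3 ≤ k) :
    ∃ E : Fin (2 ^ k) → Fin (2 ^ k) → Prop,
      (∀ v, ¬ E v v) ∧ (∃ v, Relation.TransGen E v v) ∧
      IsCovering (dG E) (extHamming k) 2 ∧
      IsPacking (dG E) (extHamming k) 2 := by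
  have hn : (8:ℕ) ≤ 2^k := by
    calc (8:ℕ) = 2^3 := by norm_num
    _ ≤ 2^k := Nat.pow_le_pow_right (by norm_num) hk
  refine ⟨S17.EE k, ?_, ?_, ?_, ?_⟩
  · intro v h
    exact S17.fm_ne h rfl
  · refine ⟨⟨3, by omega⟩, Relation.TransGen.head (b := ⟨7, by omega⟩) ?_ (Relation.TransGen.single ?_)⟩
    · show S17.fm 3 = some 7
      decide
    · show S17.fm 7 = some 3
      decide
  · -- covering
    intro x
    set t : ℕ → Bool := fun l => decide (S17.synd l x = 1) with ht
    have hmlt : (∑ l ∈ Finset.range k, if t l then 2^l else 0) < 2^k := S17.digits_lt t k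
    set m : ℕ := ∑ l ∈ Finset.range k, if t l then 2^l else 0 with hm
    have hbit : ∀ l < k, Nat.testBit m l = t l := fun l hl => S17.digits_testBit t k hl
    have hbitv : ∀ l, l < k → (if Nat.testBit m l then (1 : ZMod 2) else 0) = S17.synd l x := by
      intro l hl
      rw [hbit l hl, ht]
      rcases S17.zmod2_cases (S17.synd l x) with h | h <;> simp [h]
    rcases S17.zmod2_cases (S17.parity x) with hp | hp
    · by_cases hm0 : m = 0
      · refine ⟨x, ?_, ?_⟩
        · rw [S17.mem_ext]
          refine ⟨hp, fun j hj => ?_⟩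
          have h2 := hbitv j hj
          rw [hm0] at h2
          simpa using h2.symm
        · show wtG (S17.EE k) (x - x) ≤ 2
          rw [sub_self]
          rw [S17.wt_zero]
          omega
      · have hm1 : 1 ≤ m := by omega
        obtain ⟨hPne, hPxor, hPcond, hP1lt, hP2⟩ := S17.P_spec hm1
        have h1lt : (S17.P m).1 < 2^k := lt_of_lt_of_le hP1lt hn
        have h2lt : (S17.P m).2 < 2^k := by
          rcases hP2 with h | h
          · exact lt_of_lt_of_le h hn
          · omega
        set a : Fin (2^k) := ⟨(S17.P m).1, h1lt⟩ with ha
        set b : Fin (2^k) := ⟨(S17.P m).2, h2lt⟩ with hb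
        have hab : a ≠ b := fun h => hPne (congrArg Fin.val h)
        refine ⟨x - (S17.ee a + S17.ee b), ?_, ?_⟩
        · rw [S17.mem_ext]
          constructor
          · rw [S17.parity_sub, hp, S17.parity_pair, sub_zero]
          · intro j hj
            rw [S17.synd_sub, S17.synd_pair]
            have hv : a.val ^^^ b.val = m := hPxor
            rw [hv, hbitv j hj, sub_self]
        · show wtG (S17.EE k) (x - (S17.ee a + S17.ee b) - x) ≤ 2
          rw [sub_sub_cancel_left, S17.neg_self_zmod2]
          exact S17.wt_pair_le hab hPcond
    · refine ⟨x - S17.ee ⟨m, hmlt⟩, ?_, ?_⟩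
      · rw [S17.mem_ext]
        constructor
        · rw [S17.parity_sub, hp, S17.parity_ee, sub_self]
        · intro j hj
          rw [S17.synd_sub, S17.synd_ee]
          have hv : Nat.testBit ((⟨m, hmlt⟩ : Fin (2^k)).val) j = Nat.testBit m j := rfl
          rw [hv, hbitv j hj, sub_self]
      · show wtG (S17.EE k) (x - S17.ee ⟨m, hmlt⟩ - x) ≤ 2
        rw [sub_sub_cancel_left, S17.neg_self_zmod2]
        exact S17.wt_ee_le hn _
  · -- packing
    intro c1 h1 c2 h2 hne x hx
    obtain ⟨hd1, hd2⟩ := hx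
    have hw1 : wtG (S17.EE k) (c1 - x) ≤ 2 := hd1
    have hw2 : wtG (S17.EE k) (c2 - x) ≤ 2 := hd2
    have hy12 : c1 - x ≠ c2 - x := fun h => hne (sub_left_inj.mp h)
    rw [S17.mem_ext] at h1 h2
    have hp12 : S17.parity (c1 - x) = S17.parity (c2 - x) := by
      rw [S17.parity_sub, S17.parity_sub, h1.1, h2.1]
    have hs12 : ∀ l, l < k → S17.synd l (c1 - x) = S17.synd l (c2 - x) := by
      intro l hl
      rw [S17.synd_sub, S17.synd_sub, h1.2 l hl, h2.2 l hl]
    rcases S17.ball_classify hn hw1 with hb1 | ⟨i, hb1⟩ | ⟨i, j, hij, hcij, hb1⟩ <;>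
      rcases S17.ball_classify hn hw2 with hb2 | ⟨i', hb2⟩ | ⟨i', j', hij', hcij', hb2⟩
    · exact hy12 (hb1.trans hb2.symm)
    · rw [hb1, hb2, S17.parity_zero, S17.parity_ee] at hp12
      exact absurd hp12 (by decide)
    · have hxne : i'.val ^^^ j'.val ≠ 0 := fun h => hij' (Fin.ext (S17.xor_eq_zero_nat h))
      have hxlt : i'.val ^^^ j'.val < 2^k := Nat.xor_lt_two_pow i'.isLt j'.isLt
      obtain ⟨l, hlk, hbne⟩ := S17.bit_diff hxlt (Nat.two_pow_pos k) hxne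
      have h0 := hs12 l hlk
      rw [hb1, hb2, S17.synd_zero, S17.synd_pair] at h0
      rw [Nat.zero_testBit] at hbne
      rw [Bool.ne_false_iff.mp hbne] at h0
      exact absurd h0.symm (by simp)
    · rw [hb1, hb2, S17.parity_zero, S17.parity_ee] at hp12
      exact absurd hp12 (by decide)
    · have hii' : i ≠ i' := fun h => hy12 (by rw [hb1, hb2, h])
      obtain ⟨l, hlk, hbne⟩ := S17.bit_diff i.isLt i'.isLt (fun h => hii' (Fin.ext h))
      have h0 := hs12 l hlk
      rw [hb1, hb2, S17.synd_ee, S17.synd_ee] at h0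
      exact absurd h0 (S17.ite_zmod_ne hbne)
    · rw [hb1, hb2, S17.parity_ee, S17.parity_pair] at hp12
      exact absurd hp12 (by decide)
    · have hxne : i.val ^^^ j.val ≠ 0 := fun h => hij (Fin.ext (S17.xor_eq_zero_nat h))
      have hxlt : i.val ^^^ j.val < 2^k := Nat.xor_lt_two_pow i.isLt j.isLt
      obtain ⟨l, hlk, hbne⟩ := S17.bit_diff hxlt (Nat.two_pow_pos k) hxne
      have h0 := hs12 l hlk
      rw [hb1, hb2, S17.synd_zero, S17.synd_pair] at h0
      rw [Nat.zero_testBit] at hbne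
      rw [Bool.ne_false_iff.mp hbne] at h0
      exact absurd h0 (by simp)
    · rw [hb1, hb2, S17.parity_ee, S17.parity_pair] at hp12
      exact absurd hp12.symm (by decide)
    · by_cases hx : i.val ^^^ j.val = i'.val ^^^ j'.val
      · have hijv : i.val ≠ j.val := fun h => hij (Fin.ext h)
        have hijv' : i'.val ≠ j'.val := fun h => hij' (Fin.ext h)
        rcases S17.pair_unique hijv hijv' hcij hcij' hx with ⟨e1, e2⟩ | ⟨e1, e2⟩
        · exact hy12 (by rw [hb1, hb2, Fin.ext e1, Fin.ext e2])
        · exact hy12 (by rw [hb1, hb2, Fin.ext e1, Fin.ext e2, add_comm])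
      · have hxlt : i.val ^^^ j.val < 2^k := Nat.xor_lt_two_pow i.isLt j.isLt
        have hxlt' : i'.val ^^^ j'.val < 2^k := Nat.xor_lt_two_pow i'.isLt j'.isLt
        obtain ⟨l, hlk, hbne⟩ := S17.bit_diff hxlt hxlt' hx
        have h0 := hs12 l hlk
        rw [hb1, hb2, S17.synd_pair, S17.synd_pair] at h0
        exact absurd h0 (S17.ite_zmod_ne hbne)

theorem stmt_17 (k : ℕ) (hk : 3 ≤ k) :
    ∃ E : Fin (2 ^ k) → Fin (2 ^ k) → Prop,
      (∀ v, ¬ E v v) ∧ (∃ v, Relation.TransGen E v v) ∧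
      IsCovering (dG E) (extHamming k) 2 ∧
      IsPacking (dG E) (extHamming k) 2 := by
  exact stmt_17' k hk
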